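/- If r is a vertex with no pebbles in a configuration C on a connected graph G, and the potential of C (the maximum number of pairwise disjoint pairs of pebbles sitting on common vertices) is strictly less than t, then C is not t-fold r-solvable. -/

import Mathlib

open SimpleGraph

open Classical in
/-- A single pebbling step: remove two pebbles from `u` and add one to an adjacent `v`. -/
def PebStep {V : Type*} (G : SimpleGraph V) (C C' : V → ℕ) : Prop :=
  ∃ u v, G.Adj u v ∧ 2 ≤ C u ∧
    ∀ w, C' w = if w = u then C w - 2 else if w = v then C w + 1 else C w

/-- `C` is `t`-fold `r`-solvable: some sequence of pebbling steps places `t` pebbles on `r`. -/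
def Solvable {V : Type*} (G : SimpleGraph V) (C : V → ℕ) (r : V) (t : ℕ) : Prop :=
  ∃ C', Relation.ReflTransGen (PebStep G) C C' ∧ t ≤ C' r

/-- The size of a configuration: total number of pebbles. -/
def confSize {V : Type*} [Fintype V] (C : V → ℕ) : ℕ := ∑ v, C v

/-- The potential of a configuration: the number of pairwise disjoint pairs of
pebbles sitting on common vertices, `∑ v, ⌊C v / 2⌋`. -/
def potential {V : Type*} [Fintype V] (C : V → ℕ) : ℕ := ∑ v, C v / 2

/-- Number of vertices with no pebbles. -/
noncomputable def numZeros {V : Type*} [Fintype V] (C : V → ℕ) : ℕ :=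
  {v : V | C v = 0}.ncard

/-- The `t`-pebbling number of `G` with root `r`. -/
noncomputable def piT {V : Type*} [Fintype V] (G : SimpleGraph V) (r : V) (t : ℕ) : ℕ :=
  sInf {m | ∀ C : V → ℕ, m ≤ confSize C → Solvable G C r t}

/-- The `t`-pebbling number of `G`. -/
noncomputable def piTG {V : Type*} [Fintype V] (G : SimpleGraph V) (t : ℕ) : ℕ :=
  Finset.univ.sup fun r => piT G r t

/-- `G` is `k`-connected: more than `k` vertices and deleting fewer than `k`
vertices leaves a connected graph. -/
def KConnected {V : Type*} [Fintype V] (G : SimpleGraph V) (k : ℕ) : Prop :=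
  k < Fintype.card V ∧
    ∀ S : Set V, S.ncard < k → ((⊤ : G.Subgraph).deleteVerts S).coe.Connected

/-- `u` is a universal vertex: adjacent to every other vertex. -/
def IsUniversal {V : Type*} (G : SimpleGraph V) (u : V) : Prop :=
  ∀ v, v ≠ u → G.Adj u v



open Classical in
private noncomputable def phi {V : Type*} [Fintype V] (C : V → ℕ) (r : V) : ℕ :=
  ∑ w, (if w = r then C r else C w / 2)

private lemma phi_step {V : Type*} [Fintype V] {G : SimpleGraph V} (r : V)
    {C C' : V → ℕ} (h : PebStep G C C') : phi C' r ≤ phi C r := by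
  classical
  obtain ⟨u, v, hadj, h2, hC'⟩ := h
  have huv : u ≠ v := hadj.ne
  have hu' : C' u = C u - 2 := by rw [hC']; simp
  have hv' : C' v = C v + 1 := by rw [hC']; simp [huv.symm, Ne.symm huv]
  have hrest : ∀ w, w ≠ u → w ≠ v → C' w = C w := by
    intro w h1 h2; rw [hC']; simp [h1, h2]
  have hvmem : v ∈ Finset.univ.erase u := Finset.mem_erase.2 ⟨Ne.symm huv, Finset.mem_univ v⟩
  have split : ∀ g : V → ℕ, ∑ w, g w = g u + (g v + ∑ w ∈ (Finset.univ.erase u).erase v, g w) := by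
    intro g
    rw [Finset.add_sum_erase _ g hvmem, Finset.add_sum_erase _ g (Finset.mem_univ u)]
  have hrestsum : ∑ w ∈ (Finset.univ.erase u).erase v, (if w = r then C' r else C' w / 2)
      = ∑ w ∈ (Finset.univ.erase u).erase v, (if w = r then C r else C w / 2) := by
    apply Finset.sum_congr rfl
    intro w hw
    have h1 : w ≠ u := (Finset.mem_erase.1 (Finset.mem_erase.1 hw).2).1
    have h2 : w ≠ v := (Finset.mem_erase.1 hw).1
    by_cases hwr : w = r
    · simp only [if_pos hwr, ← hwr, hrest _ h1 h2]
    · simp only [if_neg hwr, hrest _ h1 h2]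
  have key : (if u = r then C' r else C' u / 2) + (if v = r then C' r else C' v / 2)
      ≤ (if u = r then C r else C u / 2) + (if v = r then C r else C v / 2) := by
    by_cases hur : u = r
    · have hvr : ¬ v = r := fun h => huv (hur.trans h.symm)
      rw [if_pos hur, if_pos hur, if_neg hvr, if_neg hvr, ← hur, hu', hv']
      omega
    · by_cases hvr : v = r
      · rw [if_pos hvr, if_pos hvr, if_neg hur, if_neg hur, ← hvr, hu', hv']
        omega
      · rw [if_neg hvr, if_neg hvr, if_neg hur, if_neg hur, hu', hv']
        omega
  unfold phi
  rw [split (fun w => if w = r then C' r else C' w / 2),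
      split (fun w => if w = r then C r else C w / 2)]
  rw [hrestsum]
  omega

private lemma phi_chain {V : Type*} [Fintype V] {G : SimpleGraph V} (r : V)
    {C C' : V → ℕ} (h : Relation.ReflTransGen (PebStep G) C C') : phi C' r ≤ phi C r := by
  induction h with
  | refl => exact le_refl _
  | tail _ hstep ih => exact le_trans (phi_step r hstep) ih

theorem potential_lt_not_solvable {V : Type*} [Fintype V] (G : SimpleGraph V)
    (hG : G.Connected) (C : V → ℕ) (r : V) (t : ℕ)
    (hr : C r = 0) (hpot : potential C < t) :
    ¬ Solvable G C r t := by
  classical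
  rintro ⟨C', hchain, ht⟩
  have h1 : C' r ≤ phi C' r := by
    have : (if r = r then C' r else C' r / 2) ≤ ∑ w, (if w = r then C' r else C' w / 2) :=
      Finset.single_le_sum (f := fun w => if w = r then C' r else C' w / 2)
        (fun w _ => Nat.zero_le _) (Finset.mem_univ r)
    simp only [phi]
    simpa using this
  have h2 : phi C' r ≤ phi C r := phi_chain r hchain
  have h3 : phi C r ≤ potential C := by
    unfold phi potential
    apply Finset.sum_le_sum
    intro w _
    by_cases hw : w = r
    · subst hw; simp [hr]
    · simp [hw]
  omega
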